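/- Let ρ be a PSD matrix indexed by (Fin d_a) × (Fin d) with trace 1, let u be a Hermitian matrix indexed by (Fin d_a) × (Fin d), and let z be a Hermitian matrix indexed by (Fin d_a) × J_k such that Re(Tr(ρ·u)) + λmax(−A†(u) − T(z)) + λmax(z) < 0. Define W := −u − (λmax(−A†(u) − T(z)) + λmax(z))·I and Z := −z + λmax(z)·I. Then Re(Tr(ρ·W)) > 0, Z is PSD, the matrix A†(W) + T(Z) is negative semidefinite, and Re(Tr(A(X)·W)) ≤ 0 for every Hermitian matrix X indexed by (Fin d_a) × J_k such that both X and T(X) are PSD; that is, W is an entanglement witness certifying that ρ does not lie in PST_k. -/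

import Mathlib

open Matrix
open scoped Kronecker ComplexOrder

noncomputable section

instance monoDecidable {k d : ℕ} : DecidablePred (Monotone : (Fin k → Fin d) → Prop) :=
  fun f => decidable_of_iff (∀ a b : Fin k, a ≤ b → f a ≤ f b) Iff.rfl

/-- `Jk d k` : nondecreasing sequences of length `k` from `{0, …, d-1}`. -/
abbrev Jk (d k : ℕ) := {f : Fin k → Fin d // Monotone f}

/-- the nondecreasing rearrangement of a sequence. -/
def sortTuple {d k : ℕ} (i : Fin k → Fin d) : Jk d k :=
  ⟨i ∘ Tuple.sort i, Tuple.monotone_sort i⟩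

/-- `permCount j` : the number of sequences whose sorted rearrangement is `j`. -/
def permCount {d k : ℕ} (j : Jk d k) : ℕ :=
  (Finset.univ.filter fun i : Fin k → Fin d => sortTuple i = j).card

/-- The scaled partition matrix `P`. -/
def Pmat (d k : ℕ) : Matrix (Fin k → Fin d) (Jk d k) ℂ :=
  fun i j => if sortTuple i = j then (((permCount j : ℝ) ^ (-(1/2) : ℝ) : ℝ) : ℂ) else 0

/-- `cons0 b r` is the sequence `b⌢r` sending `0` to `b` and `s+1` to `r s`. -/
def cons0 {d k : ℕ} (b : Fin d) (r : Fin (k - 1) → Fin d) : Fin k → Fin d :=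
  fun s => if h : (s : ℕ) = 0 then b else r ⟨(s : ℕ) - 1, by have := s.isLt; omega⟩

/-- Partial trace over the last `k - 1` factors. -/
def PTr (da d k : ℕ)
    (M : Matrix (Fin da × (Fin k → Fin d)) (Fin da × (Fin k → Fin d)) ℂ) :
    Matrix (Fin da × Fin d) (Fin da × Fin d) ℂ :=
  fun p q => ∑ r : Fin (k - 1) → Fin d, M (p.1, cons0 p.2 r) (q.1, cons0 q.2 r)

/-- The operator `A`. -/
def Amap (da d k : ℕ) (X : Matrix (Fin da × Jk d k) (Fin da × Jk d k) ℂ) :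
    Matrix (Fin da × Fin d) (Fin da × Fin d) ℂ :=
  PTr da d k (((1 : Matrix (Fin da) (Fin da) ℂ) ⊗ₖ Pmat d k) * X *
    ((1 : Matrix (Fin da) (Fin da) ℂ) ⊗ₖ Pmat d k)ᴴ)

/-- The extension operator `E` : `E(W) ((a,i),(a',i')) = W ((a, i 0), (a', i' 0))` when
`i` and `i'` agree on all later coordinates, and `0` otherwise. -/
def Emat (da d k : ℕ) (hk : 0 < k)
    (W : Matrix (Fin da × Fin d) (Fin da × Fin d) ℂ) :
    Matrix (Fin da × (Fin k → Fin d)) (Fin da × (Fin k → Fin d)) ℂ :=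
  fun p q =>
    if ∀ s : Fin (k - 1),
        p.2 ⟨(s : ℕ) + 1, by have := s.isLt; omega⟩ =
          q.2 ⟨(s : ℕ) + 1, by have := s.isLt; omega⟩
    then W (p.1, p.2 ⟨0, hk⟩) (q.1, q.2 ⟨0, hk⟩) else 0

/-- The adjoint operator `A†`. -/
def Adag (da d k : ℕ) (hk : 0 < k)
    (W : Matrix (Fin da × Fin d) (Fin da × Fin d) ℂ) :
    Matrix (Fin da × Jk d k) (Fin da × Jk d k) ℂ :=
  ((1 : Matrix (Fin da) (Fin da) ℂ) ⊗ₖ Pmat d k)ᴴ * Emat da d k hk W *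
    ((1 : Matrix (Fin da) (Fin da) ℂ) ⊗ₖ Pmat d k)

/-- Partial transpose in the second index. -/
def pTransp {m α : Type*} (M : Matrix (m × α) (m × α) ℂ) : Matrix (m × α) (m × α) ℂ :=
  fun p q => M (p.1, q.2) (q.1, p.2)

/-- Squared Frobenius norm. -/
def frobSq {α β : Type*} [Fintype α] [Fintype β] (M : Matrix α β ℂ) : ℝ :=
  ∑ p, ∑ q, ‖M p q‖ ^ 2

/-- Largest eigenvalue of a Hermitian matrix. -/
def lamMax {n : Type*} [Fintype n] [DecidableEq n]
    {M : Matrix n n ℂ} (hM : M.IsHermitian) : ℝ :=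
  ⨆ i, hM.eigenvalues i

end
noncomputable section
open Matrix
open scoped Kronecker ComplexOrder

-- generic lemmas
lemma psd_trace_re_nonneg {n : Type*} [Fintype n] [DecidableEq n] {M : Matrix n n ℂ}
    (hM : M.PosSemidef) : 0 ≤ (M.trace).re := by
  have h : ∀ i, 0 ≤ (M i i).re := by
    intro i
    have h2 := hM.diag_nonneg (i := i)
    exact (Complex.le_def.mp h2).1
  rw [Matrix.trace]
  simp only [Matrix.diag]
  rw [Complex.re_sum]
  exact Finset.sum_nonneg fun i _ => h i

lemma trace_mul_psd_re_nonneg {n : Type*} [Fintype n] [DecidableEq n]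
    {A B : Matrix n n ℂ} (hA : A.PosSemidef) (hB : B.PosSemidef) :
    0 ≤ ((A * B).trace).re := by
  open scoped MatrixOrder in obtain ⟨C, rfl⟩ := CStarAlgebra.nonneg_iff_eq_star_mul_self.mp hB.nonneg
  rw [← mul_assoc, Matrix.trace_mul_cycle]
  exact psd_trace_re_nonneg (hA.mul_mul_conjTranspose_same C)

lemma lamMax_smul_sub_posSemidef {n : Type*} [Fintype n] [DecidableEq n] [Nonempty n]
    {M : Matrix n n ℂ} (hM : M.IsHermitian) :
    ((((⨆ i, hM.eigenvalues i : ℝ)) : ℂ) • (1 : Matrix n n ℂ) - M).PosSemidef := by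
  set c : ℝ := ⨆ i, hM.eigenvalues i with hc
  have hle : ∀ i, hM.eigenvalues i ≤ c := fun i =>
    le_ciSup (Set.Finite.bddAbove (Set.finite_range _)) i
  have hU : (hM.eigenvectorUnitary : Matrix n n ℂ) *
      star (hM.eigenvectorUnitary : Matrix n n ℂ) = 1 := by
    exact (Matrix.mem_unitaryGroup_iff).mp hM.eigenvectorUnitary.2
  have key : ((c : ℂ)) • (1 : Matrix n n ℂ) - M =
      (hM.eigenvectorUnitary : Matrix n n ℂ) *
        Matrix.diagonal (fun i => ((c - hM.eigenvalues i : ℝ) : ℂ)) *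
        ((hM.eigenvectorUnitary : Matrix n n ℂ))ᴴ := by
    nth_rewrite 1 [hM.spectral_theorem]
    rw [← Matrix.star_eq_conjTranspose]
    have : Matrix.diagonal (fun i => ((c - hM.eigenvalues i : ℝ) : ℂ)) =
        (c : ℂ) • (1 : Matrix n n ℂ) - Matrix.diagonal (RCLike.ofReal ∘ hM.eigenvalues) := by
      rw [Matrix.smul_one_eq_diagonal, Matrix.diagonal_sub]
      ext i j
      by_cases h : i = j <;>
        simp [h, Matrix.diagonal_apply, RCLike.ofReal, Complex.ofReal_sub]
    rw [this]
    simp only [Matrix.mul_sub, Matrix.sub_mul, Matrix.mul_smul, Matrix.smul_mul,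
      Matrix.mul_one, Matrix.mul_assoc, hU, Unitary.conjStarAlgAut_apply]
  rw [key]
  exact (Matrix.posSemidef_diagonal_iff.mpr fun i =>
    Complex.zero_le_real.mpr (sub_nonneg.mpr (hle i))).mul_mul_conjTranspose_same _
lemma sortTuple_of_monotone {d k : ℕ} (j : Jk d k) : sortTuple j.1 = j := by
  apply Subtype.ext
  show j.1 ∘ ⇑(Tuple.sort j.1) = j.1
  rw [Tuple.sort_eq_refl_iff_monotone.mpr j.2]
  rfl

lemma permCount_pos {d k : ℕ} (j : Jk d k) : 0 < permCount j := by
  rw [permCount, Finset.card_pos]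
  exact ⟨j.1, by simp [sortTuple_of_monotone]⟩

lemma Pmat_orth (d k : ℕ) : (Pmat d k)ᴴ * Pmat d k = 1 := by
  ext j j'
  simp only [Matrix.mul_apply, Matrix.conjTranspose_apply, Pmat]
  by_cases h : j = j'
  · subst h
    rw [Matrix.one_apply_eq]
    have hterm : ∀ i : Fin k → Fin d,
        star (if sortTuple i = j then (((permCount j : ℝ) ^ (-(1/2) : ℝ) : ℝ) : ℂ) else 0) *
          (if sortTuple i = j then (((permCount j : ℝ) ^ (-(1/2) : ℝ) : ℝ) : ℂ) else 0) =
        if sortTuple i = j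
          then ((((permCount j : ℝ) ^ (-(1/2) : ℝ)) * ((permCount j : ℝ) ^ (-(1/2) : ℝ)) : ℝ) : ℂ)
          else 0 := by
      intro i
      split_ifs with hi <;> simp [Complex.ofReal_mul, Complex.star_def, Complex.conj_ofReal]
    rw [Finset.sum_congr rfl fun i _ => hterm i, ← Finset.sum_filter]
    rw [Finset.sum_const]
    rw [show (Finset.univ.filter fun i : Fin k → Fin d => sortTuple i = j).card = permCount j
      from rfl]
    have hp : (0 : ℝ) < (permCount j : ℝ) := by exact_mod_cast permCount_pos j
    rw [nsmul_eq_mul]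
    rw [← Complex.ofReal_natCast, ← Complex.ofReal_mul, ← Real.rpow_add hp]
    norm_num
    rw [Real.rpow_neg_one, ← Complex.ofReal_natCast, ← Complex.ofReal_mul,
      mul_inv_cancel₀ (ne_of_gt hp)]
    simp
  · rw [Matrix.one_apply_ne h]
    apply Finset.sum_eq_zero
    intro i _
    split_ifs with h1 h2
    · exact absurd (h1 ▸ h2) h
    · simp
    · simp
    · simp
lemma kron_conjT {m n p q : Type*} (A : Matrix m n ℂ) (B : Matrix p q ℂ) :
    (A ⊗ₖ B)ᴴ = Aᴴ ⊗ₖ Bᴴ := by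
  ext ⟨a, b⟩ ⟨c, e⟩
  simp [Matrix.conjTranspose_apply, Matrix.kroneckerMap_apply, star_mul']

lemma kronP_orth (da d k : ℕ) :
    ((1 : Matrix (Fin da) (Fin da) ℂ) ⊗ₖ Pmat d k)ᴴ *
      ((1 : Matrix (Fin da) (Fin da) ℂ) ⊗ₖ Pmat d k) = 1 := by
  rw [kron_conjT, ← Matrix.mul_kronecker_mul, Pmat_orth]
  simp [Matrix.one_kronecker_one]

lemma cons0_zero {d k : ℕ} (hk : 0 < k) (b : Fin d) (r : Fin (k - 1) → Fin d) :
    cons0 b r ⟨0, hk⟩ = b := by simp [cons0]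

lemma cons0_succ {d k : ℕ} (b : Fin d) (r : Fin (k - 1) → Fin d) (s : Fin (k - 1))
    (h : (s : ℕ) + 1 < k) : cons0 b r ⟨(s : ℕ) + 1, h⟩ = r s := by
  have hne : ¬(((⟨(s : ℕ) + 1, h⟩ : Fin k) : ℕ) = 0) := by simp
  rw [cons0, dif_neg hne]
  congr 1

/-- sequences `Fin k → Fin d` are the same as pairs (head, tail). -/
def consEquiv (d k : ℕ) (hk : 0 < k) :
    (Fin d × (Fin (k - 1) → Fin d)) ≃ (Fin k → Fin d) where
  toFun p := cons0 p.1 p.2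
  invFun i := (i ⟨0, hk⟩, fun s => i ⟨(s : ℕ) + 1, by have := s.isLt; omega⟩)
  left_inv p := by
    apply Prod.ext
    · exact cons0_zero hk p.1 p.2
    · funext s
      exact cons0_succ p.1 p.2 s (by have := s.isLt; omega)
  right_inv i := by
    funext t
    show cons0 (i ⟨0, hk⟩) (fun s => i ⟨(s : ℕ) + 1, by have := s.isLt; omega⟩) t = i t
    rcases Nat.eq_zero_or_pos (t : ℕ) with h | h
    · rw [show t = ⟨0, hk⟩ from Fin.ext h]
      exact cons0_zero hk _ _
    · have ht2 := t.isLt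
      set s : Fin (k - 1) := ⟨(t : ℕ) - 1, by omega⟩ with hs
      have ht : (s : ℕ) + 1 < k := by simp [hs]; omega
      rw [show t = ⟨(s : ℕ) + 1, ht⟩ from Fin.ext (by simp [hs]; omega)]
      rw [cons0_succ]

lemma Emat_one (da d k : ℕ) (hk : 0 < k) :
    Emat da d k hk 1 = 1 := by
  ext ⟨a, i⟩ ⟨a', i'⟩
  simp only [Emat, Matrix.one_apply]
  by_cases hP : (a, i) = (a', i')
  · rw [if_pos hP]
    obtain ⟨ha, hi⟩ := Prod.mk.injEq .. ▸ hP
    subst ha; subst hi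
    simp
  · rw [if_neg hP]
    split_ifs with h1 h2
    · exfalso
      apply hP
      obtain ⟨ha, hb⟩ := Prod.mk.injEq .. ▸ h2
      refine Prod.ext ha (funext fun t => ?_)
      rcases Nat.eq_zero_or_pos (t : ℕ) with h | h
      · rw [show t = ⟨0, hk⟩ from Fin.ext h]; exact hb
      · have ht2 := t.isLt
        have := h1 ⟨(t : ℕ) - 1, by omega⟩
        simpa [Fin.ext_iff, show (t : ℕ) - 1 + 1 = (t : ℕ) by omega] using this
    · rfl
    · rfl
lemma Emat_add (da d k : ℕ) (hk : 0 < k) (U V : Matrix (Fin da × Fin d) (Fin da × Fin d) ℂ) :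
    Emat da d k hk (U + V) = Emat da d k hk U + Emat da d k hk V := by
  ext p q
  simp only [Emat, Matrix.add_apply]
  split <;> simp

lemma Emat_neg (da d k : ℕ) (hk : 0 < k) (U : Matrix (Fin da × Fin d) (Fin da × Fin d) ℂ) :
    Emat da d k hk (-U) = -Emat da d k hk U := by
  ext p q
  simp only [Emat, Matrix.neg_apply]
  split <;> simp

lemma Emat_smul (da d k : ℕ) (hk : 0 < k) (c : ℂ)
    (U : Matrix (Fin da × Fin d) (Fin da × Fin d) ℂ) :
    Emat da d k hk (c • U) = c • Emat da d k hk U := by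
  ext p q
  simp only [Emat, Matrix.smul_apply]
  split <;> simp

lemma Adag_one (da d k : ℕ) (hk : 0 < k) : Adag da d k hk 1 = 1 := by
  rw [Adag, Emat_one, Matrix.mul_one, kronP_orth]

lemma Adag_W (da d k : ℕ) (hk : 0 < k) (u : Matrix (Fin da × Fin d) (Fin da × Fin d) ℂ)
    (c : ℂ) :
    Adag da d k hk (-u - c • 1) = -(Adag da d k hk u) - c • (1 : Matrix (Fin da × Jk d k) (Fin da × Jk d k) ℂ) := by
  have : (-u - c • 1 : Matrix (Fin da × Fin d) (Fin da × Fin d) ℂ) = -u + -(c • 1) :=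
    sub_eq_add_neg _ _
  rw [Adag, this, Emat_add, Emat_neg, Emat_neg, Emat_smul, Emat_one]
  simp only [Matrix.mul_add, Matrix.add_mul, Matrix.mul_neg, Matrix.neg_mul,
    Matrix.mul_smul, Matrix.smul_mul, Matrix.mul_one]
  rw [← Adag, Adag, kronP_orth, sub_eq_add_neg]

lemma pTransp_one {m α : Type*} [Fintype m] [Fintype α] [DecidableEq m] [DecidableEq α] :
    pTransp (1 : Matrix (m × α) (m × α) ℂ) = 1 := by
  ext ⟨a, x⟩ ⟨b, y⟩
  simp only [pTransp, Matrix.one_apply, Prod.mk.injEq, Prod.ext_iff]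
  by_cases h1 : a = b <;> by_cases h2 : x = y <;> simp [h1, h2, eq_comm]

lemma pTransp_Z {m α : Type*} [Fintype m] [Fintype α] [DecidableEq m] [DecidableEq α]
    (z : Matrix (m × α) (m × α) ℂ) (c : ℂ) :
    pTransp (-z + c • 1) = -pTransp z + c • (1 : Matrix (m × α) (m × α) ℂ) := by
  funext p q
  show (-z + c • 1) (p.1, q.2) (q.1, p.2) = (-pTransp z + c • 1) p q
  simp only [Matrix.add_apply, Matrix.neg_apply, Matrix.smul_apply, pTransp]
  congr 1
  have := congrFun (congrFun (pTransp_one (m := m) (α := α)) p) q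
  simp only [pTransp] at this
  rw [this]

lemma trace_mul_pTransp {m α : Type*} [Fintype m] [Fintype α]
    (X Z : Matrix (m × α) (m × α) ℂ) :
    (X * pTransp Z).trace = (pTransp X * Z).trace := by
  simp only [Matrix.trace, Matrix.diag, Matrix.mul_apply, pTransp, Fintype.sum_prod_type]
  apply Finset.sum_congr rfl; intro a _
  exact (Finset.sum_congr rfl fun x _ => Finset.sum_comm).trans
    (Finset.sum_comm.trans (Finset.sum_congr rfl fun y _ => Finset.sum_comm))
lemma consEquiv_apply {d k : ℕ} (hk : 0 < k) (b : Fin d) (r : Fin (k - 1) → Fin d) :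
    consEquiv d k hk (b, r) = cons0 b r := rfl

lemma trace_PTr_mul (da d k : ℕ) (hk : 0 < k)
    (M : Matrix (Fin da × (Fin k → Fin d)) (Fin da × (Fin k → Fin d)) ℂ)
    (W : Matrix (Fin da × Fin d) (Fin da × Fin d) ℂ) :
    (PTr da d k M * W).trace = (M * Emat da d k hk W).trace := by
  have hE : ∀ (a a' : Fin da) (b b' : Fin d) (r r' : Fin (k - 1) → Fin d),
      Emat da d k hk W (a', cons0 b' r') (a, cons0 b r) =
        if r' = r then W (a', b') (a, b) else 0 := by
    intro a a' b b' r r'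
    simp only [Emat]
    rw [cons0_zero, cons0_zero]
    by_cases h : r' = r
    · subst h
      rw [if_pos rfl, if_pos]
      intro s
      rw [cons0_succ _ _ s (by have := s.isLt; omega),
        cons0_succ _ _ s (by have := s.isLt; omega)]
    · rw [if_neg h, if_neg]
      intro hall
      apply h; funext s
      have h2 := hall s
      rwa [cons0_succ _ _ s (by have := s.isLt; omega),
        cons0_succ _ _ s (by have := s.isLt; omega)] at h2
  calc (PTr da d k M * W).trace
      = ∑ a : Fin da, ∑ b : Fin d, ∑ a' : Fin da, ∑ b' : Fin d, ∑ r : Fin (k - 1) → Fin d,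
          M (a, cons0 b r) (a', cons0 b' r) * W (a', b') (a, b) := by
        simp only [Matrix.trace, Matrix.diag, Matrix.mul_apply, PTr, Fintype.sum_prod_type,
          Finset.sum_mul]
    _ = ∑ a : Fin da, ∑ b : Fin d, ∑ r : Fin (k - 1) → Fin d, ∑ a' : Fin da, ∑ b' : Fin d,
          M (a, cons0 b r) (a', cons0 b' r) * W (a', b') (a, b) := by
        apply Finset.sum_congr rfl; intro a _
        apply Finset.sum_congr rfl; intro b _
        exact (Finset.sum_congr rfl fun a' _ => Finset.sum_comm).trans Finset.sum_comm
    _ = (M * Emat da d k hk W).trace := by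
        symm
        rw [Matrix.trace]
        simp only [Matrix.diag, Matrix.mul_apply, Fintype.sum_prod_type]
        apply Finset.sum_congr rfl; intro a _
        rw [← Equiv.sum_comp (consEquiv d k hk), Fintype.sum_prod_type]
        apply Finset.sum_congr rfl; intro b _
        apply Finset.sum_congr rfl; intro r _
        simp only [consEquiv_apply]
        apply Finset.sum_congr rfl; intro a' _
        rw [← Equiv.sum_comp (consEquiv d k hk), Fintype.sum_prod_type]
        apply Finset.sum_congr rfl; intro b' _
        simp only [consEquiv_apply, hE, mul_ite, mul_zero]
        rw [Finset.sum_ite_eq' Finset.univ r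
          (fun r' => M (a, cons0 b r) (a', cons0 b' r') * W (a', b') (a, b)),
          if_pos (Finset.mem_univ r)]
theorem stmt15 (da d k : ℕ) (hda : 0 < da) (hd : 0 < d) (hk : 0 < k)
    (ρ : Matrix (Fin da × Fin d) (Fin da × Fin d) ℂ)
    (hρ : ρ.PosSemidef) (hρtr : ρ.trace = 1)
    (u : Matrix (Fin da × Fin d) (Fin da × Fin d) ℂ) (hu : u.IsHermitian)
    (z : Matrix (Fin da × Jk d k) (Fin da × Jk d k) ℂ) (hz : z.IsHermitian)
    (h1 : (-(Adag da d k hk u) - pTransp z).IsHermitian)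
    (hlt : ((ρ * u).trace).re + lamMax h1 + lamMax hz < 0)
    (W : Matrix (Fin da × Fin d) (Fin da × Fin d) ℂ)
    (hW : W = -u - (((lamMax h1 + lamMax hz : ℝ)) : ℂ) •
        (1 : Matrix (Fin da × Fin d) (Fin da × Fin d) ℂ))
    (Z : Matrix (Fin da × Jk d k) (Fin da × Jk d k) ℂ)
    (hZ : Z = -z + ((lamMax hz : ℝ) : ℂ) •
        (1 : Matrix (Fin da × Jk d k) (Fin da × Jk d k) ℂ)) :
    0 < ((ρ * W).trace).re ∧
    Z.PosSemidef ∧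
    (-(Adag da d k hk W + pTransp Z)).PosSemidef ∧
    ∀ X : Matrix (Fin da × Jk d k) (Fin da × Jk d k) ℂ,
      X.IsHermitian → X.PosSemidef → (pTransp X).PosSemidef →
        ((Amap da d k X * W).trace).re ≤ 0 := by
  haveI : Nonempty (Jk d k) := ⟨⟨fun _ => ⟨0, hd⟩, monotone_const⟩⟩
  haveI : Nonempty (Fin da) := ⟨⟨0, hda⟩⟩
  have hZpsd : Z.PosSemidef := by
    rw [hZ, neg_add_eq_sub]
    exact lamMax_smul_sub_posSemidef hz
  have hAW : Adag da d k hk W =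
      -(Adag da d k hk u) - (((lamMax h1 + lamMax hz : ℝ)) : ℂ) • 1 := by
    rw [hW]; exact Adag_W da d k hk u _
  have hptZ : pTransp Z = -pTransp z + ((lamMax hz : ℝ) : ℂ) • 1 := by
    rw [hZ]; exact pTransp_Z z _
  have hkey : -(Adag da d k hk W + pTransp Z) =
      ((lamMax h1 : ℝ) : ℂ) • 1 - (-(Adag da d k hk u) - pTransp z) := by
    rw [hAW, hptZ]
    push_cast
    module
  have hNpsd : (-(Adag da d k hk W + pTransp Z)).PosSemidef := by
    rw [hkey]
    exact lamMax_smul_sub_posSemidef h1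
  refine ⟨?_, hZpsd, hNpsd, ?_⟩
  · rw [hW, Matrix.mul_sub, Matrix.mul_neg, Matrix.mul_smul, Matrix.mul_one,
      Matrix.trace_sub, Matrix.trace_neg, Matrix.trace_smul, hρtr]
    simp only [smul_eq_mul, mul_one, Complex.sub_re, Complex.neg_re, Complex.ofReal_re]
    linarith [hlt]
  · intro X hX hXpsd hpXpsd
    have htr : (Amap da d k X * W).trace = (X * Adag da d k hk W).trace := by
      rw [Amap, trace_PTr_mul da d k hk]
      calc ((((1 : Matrix (Fin da) (Fin da) ℂ) ⊗ₖ Pmat d k) * X *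
              ((1 : Matrix (Fin da) (Fin da) ℂ) ⊗ₖ Pmat d k)ᴴ) * Emat da d k hk W).trace
          = (((1 : Matrix (Fin da) (Fin da) ℂ) ⊗ₖ Pmat d k) *
              (X * (((1 : Matrix (Fin da) (Fin da) ℂ) ⊗ₖ Pmat d k)ᴴ *
                Emat da d k hk W))).trace := by
            rw [Matrix.mul_assoc, Matrix.mul_assoc]
        _ = ((X * (((1 : Matrix (Fin da) (Fin da) ℂ) ⊗ₖ Pmat d k)ᴴ * Emat da d k hk W)) *
              ((1 : Matrix (Fin da) (Fin da) ℂ) ⊗ₖ Pmat d k)).trace :=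
            Matrix.trace_mul_comm _ _
        _ = (X * Adag da d k hk W).trace := by
            rw [Adag, Matrix.mul_assoc, Matrix.mul_assoc]
    have hsplit : Adag da d k hk W = -(-(Adag da d k hk W + pTransp Z)) - pTransp Z := by
      abel
    rw [htr, hsplit, Matrix.mul_sub, Matrix.mul_neg, Matrix.trace_sub, Matrix.trace_neg,
      trace_mul_pTransp]
    have h2 := trace_mul_psd_re_nonneg hXpsd hNpsd
    have h3 := trace_mul_psd_re_nonneg hpXpsd hZpsd
    simp only [Complex.sub_re, Complex.neg_re, neg_neg]
    linarith
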